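/- Let k ⊆ l be a finite separable field extension of degree n, and let l ⊆ l' be a field extension with l'/k Galois. Then there is an isomorphism of l'-algebras l' ⊗_k l ≅ ∏_{σ} l', where the product is indexed by the n distinct k-embeddings of l into l'. -/

import Mathlib

open TensorProduct

/-- Let `k ⊆ l` be a finite separable field extension and `l ⊆ l'` a field extension with
`l'/k` Galois. Then the number of `k`-embeddings `l → l'` equals `[l : k]`, and there is an
isomorphism of `l'`-algebras `l' ⊗[k] l ≅ ∏_{σ : l →ₐ[k] l'} l'`. -/
theorem tensor_galois_iso_prod (k l l' : Type*) [Field k] [Field l] [Field l']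
    [Algebra k l] [Algebra k l'] [Algebra l l'] [IsScalarTower k l l']
    [FiniteDimensional k l] [Algebra.IsSeparable k l] [IsGalois k l'] :
    Nat.card (l →ₐ[k] l') = Module.finrank k l ∧
      Nonempty ((l' ⊗[k] l) ≃ₐ[l'] ((l →ₐ[k] l') → l')) := by
  classical
  have hsplit : ∀ x : l, ((minpoly k x).map (algebraMap k l')).Splits := fun x => by
    rw [← minpoly.algebraMap_eq (algebraMap l l').injective x]
    exact Normal.splits inferInstance _
  have hcard : Fintype.card (l →ₐ[k] l') = Module.finrank k l :=
    AlgHom.card_of_splits k l l' hsplit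
  refine ⟨by rw [Nat.card_eq_fintype_card, hcard], ?_⟩
  set ι := Fin (Module.finrank k l) with hι
  let b : Module.Basis ι k l := Module.finBasis k l
  let e : ι ≃ (l →ₐ[k] l') := (Fintype.equivFinOfCardEq hcard).symm
  -- Dedekind linear independence of characters
  have hLI : LinearIndependent l' (fun σ : l →ₐ[k] l' => (σ : l → l')) := by
    have := (linearIndependent_monoidHom l l').comp
      (fun σ : l →ₐ[k] l' => (σ : l →* l')) AlgHom.coe_monoidHom_injective
    exact this
  -- the matrix of embeddings evaluated on the basis
  let M : Matrix (l →ₐ[k] l') (l →ₐ[k] l') l' :=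
    Matrix.of fun σ τ => σ (b (e.symm τ))
  have hrows : LinearIndependent l' (fun σ => M σ) := by
    rw [Fintype.linearIndependent_iff]
    intro c hc
    have key : ∀ i : ι, ∑ σ : l →ₐ[k] l', c σ * σ (b i) = 0 := by
      intro i
      have := congrFun hc (e i)
      simpa [M, Finset.sum_apply] using this
    have hzero : ∑ σ : l →ₐ[k] l', c σ • (σ : l → l') = 0 := by
      funext x
      have hx : (∑ i : ι, b.repr x i • b i) = x := b.sum_repr x
      calc (∑ σ : l →ₐ[k] l', c σ • (σ : l → l')) x
          = ∑ σ : l →ₐ[k] l', c σ * σ x := by simp [Finset.sum_apply]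
        _ = ∑ σ : l →ₐ[k] l', c σ * σ (∑ i : ι, b.repr x i • b i) := by rw [hx]
        _ = ∑ σ : l →ₐ[k] l', ∑ i : ι,
              algebraMap k l' (b.repr x i) * (c σ * σ (b i)) := by
            refine Finset.sum_congr rfl fun σ _ => ?_
            rw [map_sum, Finset.mul_sum]
            refine Finset.sum_congr rfl fun i _ => ?_
            rw [map_smul, Algebra.smul_def]
            ring
        _ = ∑ i : ι, algebraMap k l' (b.repr x i) *
              (∑ σ : l →ₐ[k] l', c σ * σ (b i)) := by
            rw [Finset.sum_comm]
            simp [Finset.mul_sum]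
        _ = 0 := by simp [key]
    exact Fintype.linearIndependent_iff.mp hLI c hzero
  have hM : IsUnit M := Matrix.linearIndependent_rows_iff_isUnit.mp hrows
  -- the algebra map
  let Φ : (l' ⊗[k] l) →ₐ[l'] ((l →ₐ[k] l') → l') :=
    Pi.algHom _ _ fun σ =>
      Algebra.TensorProduct.lift (AlgHom.id l' l') σ fun _ _ => mul_comm _ _
  have hΦ : ∀ (x : l' ⊗[k] l) (σ : l →ₐ[k] l'),
      Φ x σ = ∑ i : ι, (b.baseChange l').repr x i * σ (b i) := by
    intro x σ
    conv_lhs => rw [← (b.baseChange l').sum_repr x]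
    simp only [map_sum, map_smul, Finset.sum_apply, Pi.smul_apply]
    refine Finset.sum_congr rfl fun i _ => ?_
    rw [Module.Basis.baseChange_apply, smul_eq_mul]
    congr 1
    simp [Φ, Algebra.TensorProduct.lift_tmul]
    exact one_mul _
  have hmv : ∀ (z : l' ⊗[k] l) (σ : l →ₐ[k] l'),
      M.mulVec (fun τ => (b.baseChange l').repr z (e.symm τ)) σ = Φ z σ := by
    intro z σ
    rw [hΦ, ← Equiv.sum_comp e.symm (fun i => (b.baseChange l').repr z i * σ (b i))]
    simp [Matrix.mulVec, dotProduct, M, mul_comm]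
  have hinj : Function.Injective Φ := by
    have hMinj : Function.Injective M.mulVec := Matrix.mulVec_injective_iff_isUnit.mpr hM
    intro x y hxy
    have hrep : (b.baseChange l').repr x = (b.baseChange l').repr y := by
      have h1 : M.mulVec (fun τ => (b.baseChange l').repr x (e.symm τ)) =
          M.mulVec (fun τ => (b.baseChange l').repr y (e.symm τ)) := by
        funext σ
        rw [hmv, hmv, hxy]
      have h2 := hMinj h1
      ext i
      have := congrFun h2 (e i)
      simpa using this
    calc x = (b.baseChange l').repr.symm ((b.baseChange l').repr x) := by simp
      _ = (b.baseChange l').repr.symm ((b.baseChange l').repr y) := by rw [hrep]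
      _ = y := by simp
  have hfr : Module.finrank l' (l' ⊗[k] l) = Module.finrank l' ((l →ₐ[k] l') → l') := by
    rw [Module.finrank_baseChange, Module.finrank_pi, hcard]
  have hsurj : Function.Surjective Φ.toLinearMap :=
    (LinearMap.injective_iff_surjective_of_finrank_eq_finrank (f := Φ.toLinearMap) hfr).mp hinj
  have hbij : Function.Bijective Φ := ⟨hinj, hsurj⟩
  exact ⟨AlgEquiv.ofBijective Φ hbij⟩
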